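/- Let S be a cartesian category, X: S^op → sSet a diagram of simplicial sets, and k ≥ 2 a natural number. If X(s) is a k-coskeletal simplicial set for every object s of S, then the simplicial Grothendieck construction ∫_S X is k-coskeletal. -/

import Mathlib

/-!
# The simplicial Grothendieck construction preserves coskeletality

For a cartesian category `S` and a diagram `X : Sᵒᵖ ⥤ sSet` of simplicial
sets, the simplicial Grothendieck construction `∫_S X` has as `n`-simplices
the pairs `(t, x)` where `t` is an `n`-simplex of the nerve of `S` (a chain
`t₀ ⟶ t₁ ⟶ ⋯ ⟶ tₙ` in `S`) and `x` is a compatible family assigning to every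
simplicial operator `r : [m] ⟶ [n]` an `m`-simplex `x r ∈ X(in(r^*t))ₘ`,
where `in(−)` is the source object of the corresponding chain in `S`.

We prove (statement; proof omitted) that if every `X(s)` is `k`-coskeletal
(`k ≥ 2`) then so is `∫_S X`.
-/

open CategoryTheory Opposite SimplexCategory

universe v u

variable (S : Type u) [Category.{v} S]

/-- An `n`-simplex of the nerve of `S`: a chain of composable arrows
`t₀ ⟶ t₁ ⟶ ⋯ ⟶ tₙ` in `S` (recorded functorially). -/
structure NerveChain (n : SimplexCategory) : Type (max u v) where
  vertex : Fin (n.len + 1) → S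
  arrow : ∀ i j : Fin (n.len + 1), i ≤ j → (vertex i ⟶ vertex j)
  arrow_refl : ∀ (i) (h : i ≤ i), arrow i i h = 𝟙 _
  arrow_trans : ∀ (i j k) (hij : i ≤ j) (hjk : j ≤ k) (hik : i ≤ k),
    arrow i k hik = arrow i j hij ≫ arrow j k hjk

variable {S}

/-- Restriction of a chain along a simplicial operator. -/
def NerveChain.pull {n m : SimplexCategory} (g : m ⟶ n) (t : NerveChain S n) :
    NerveChain S m where
  vertex i := t.vertex (g.toOrderHom i)
  arrow i j h := t.arrow _ _ (g.toOrderHom.monotone h)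
  arrow_refl i h := t.arrow_refl _ _
  arrow_trans i j k hij hjk hik := t.arrow_trans _ _ _ _ _ _

variable (S)

/-- An `n`-simplex of the simplicial Grothendieck construction `∫_S X`:
a pair `(t, x)` where `t` is an `n`-simplex of the nerve of `S` and `x` is a
compatible family with `x r ∈ X(in(r^* t))ₘ` for every `r : [m] ⟶ [n]`,
`in(−)` denoting the source object of a chain. -/
structure GrothSimplex (X : Sᵒᵖ ⥤ SSet.{max u v}) (n : SimplexCategory) :
    Type (max u v) where
  t : NerveChain S n
  x : ∀ (m : SimplexCategory) (r : m ⟶ n),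
    (X.obj (op (t.vertex (r.toOrderHom 0)))).obj (op m)
  compat : ∀ (m m' : SimplexCategory) (α : m' ⟶ m) (r : m ⟶ n)
      (hle : r.toOrderHom 0 ≤ (α ≫ r).toOrderHom 0),
    (X.obj (op (t.vertex (r.toOrderHom 0)))).map α.op (x m r) =
      (X.map (t.arrow (r.toOrderHom 0) ((α ≫ r).toOrderHom 0) hle).op).app (op m')
        (x m' (α ≫ r))

theorem GrothSimplex.ext_aux {X : Sᵒᵖ ⥤ SSet.{max u v}} {n : SimplexCategory}
    {a b : GrothSimplex S X n} (ht : a.t = b.t)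
    (hx : ∀ m r, HEq (a.x m r) (b.x m r)) : a = b := by
  obtain ⟨ta, xa, ca⟩ := a; obtain ⟨tb, xb, cb⟩ := b
  dsimp at ht
  cases ht
  have : xa = xb := by
    funext m r
    exact eq_of_heq (hx m r)
  cases this
  rfl

/-- The simplicial Grothendieck construction `∫_S X` of a diagram of
simplicial sets `X : Sᵒᵖ ⥤ sSet`. -/
def grothS (X : Sᵒᵖ ⥤ SSet.{max u v}) : SSet.{max u v} where
  obj n := GrothSimplex S X n.unop
  map {n n'} g := TypeCat.ofHom fun a =>
    { t := a.t.pull g.unop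
      x := fun m r => a.x m (r ≫ g.unop)
      compat := fun m m' α r hle =>
        a.compat m m' α (r ≫ g.unop) (g.unop.toOrderHom.monotone hle) }
  map_id n := by
    ext a
    exact GrothSimplex.ext_aux S rfl
      (fun m r => congr_arg_heq (a.x m) (Category.comp_id r))
  map_comp g g' := by
    ext a
    exact GrothSimplex.ext_aux S rfl
      (fun m r => congr_arg_heq (a.x m) (Category.assoc r g'.unop g.unop).symm)


universe w

open CategoryTheory.Functor CategoryTheory.Limits

namespace BridgeAux

variable (Y : SSet.{w}) (k : ℕ) (n : SimplexCategory)

abbrev Diag : StructuredArrow (op n) (SimplexCategory.Truncated.inclusion k).op ⥤ Type w :=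
  StructuredArrow.proj (op n) (SimplexCategory.Truncated.inclusion k).op ⋙
    ((SimplexCategory.Truncated.inclusion k).op ⋙ Y)

/-- structured arrow from data -/
abbrev obj {p : SimplexCategory} (hp : p.len ≤ k) (b : p ⟶ n) :
    StructuredArrow (op n) (SimplexCategory.Truncated.inclusion k).op :=
  StructuredArrow.mk (Y := op (⟨p, hp⟩ : SimplexCategory.Truncated k)) b.op

theorem sections_correspond
    (f : ∀ (p : SimplexCategory), p.len ≤ k → (p ⟶ n) → Y.obj (op p))
    (hf : ∀ p hp q hq (g : q ⟶ p) (b : p ⟶ n), Y.map g.op (f p hp b) = f q hq (g ≫ b)) :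
    (fun (j : StructuredArrow (op n) (SimplexCategory.Truncated.inclusion k).op) => f j.right.unop.obj j.right.unop.property j.hom.unop) ∈ (Diag Y k n).sections := by
  intro j j' φ
  have w := StructuredArrow.w φ
  have : j'.hom.unop = ((SimplexCategory.Truncated.inclusion k).map φ.right.unop) ≫ j.hom.unop := by
    rw [← w]; rfl
  dsimp [Diag]
  rw [this]
  exact hf _ _ _ _ _ _

end BridgeAux

open SimplicialObject SimplicialObject.Truncated BridgeAux in
theorem bridge (Y : SSet.{w}) (k : ℕ) :
    Y.IsCoskeletal k ↔ ∀ (n : SimplexCategory)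
      (f : ∀ (p : SimplexCategory), p.len ≤ k → (p ⟶ n) → Y.obj (op p)),
      (∀ p hp q hq (g : q ⟶ p) (b : p ⟶ n), Y.map g.op (f p hp b) = f q hq (g ≫ b)) →
      ∃! y : Y.obj (op n), ∀ p (hp : p.len ≤ k) (b : p ⟶ n), Y.map b.op y = f p hp b := by
  constructor
  · intro h n f hf
    have hpw : (rightExtensionInclusion Y k).IsPointwiseRightKanExtension :=
      isPointwiseRightKanExtensionOfIsRightKanExtension _ (𝟙 _)
    have hl := (Types.isLimit_iff ((rightExtensionInclusion Y k).coneAt (op n))).mp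
      ⟨hpw (op n)⟩ _ (sections_correspond Y k n f hf)
    obtain ⟨y, hy, hy'⟩ := hl
    refine ⟨y, fun p hp b => ?_, fun y' hy'' => hy' y' fun j => ?_⟩
    · have := hy (obj k n hp b)
      exact this
    · have := hy'' j.right.unop.obj j.right.unop.property j.hom.unop
      exact this
  · intro hfill
    constructor
    have hpw : (rightExtensionInclusion Y k).IsPointwiseRightKanExtension := by
      intro Z
      refine Nonempty.some ((Types.isLimit_iff
        ((rightExtensionInclusion Y k).coneAt Z)).mpr fun s hs => ?_)
      obtain ⟨y, hy, hy'⟩ := hfill Z.unop (fun p hp b => s (obj k Z.unop hp b))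
        (fun p hp q hq g b => hs (j := obj k Z.unop hp b) (j' := obj k Z.unop hq (g ≫ b))
          (StructuredArrow.homMk (ObjectProperty.homMk g : (⟨q, hq⟩ : SimplexCategory.Truncated k) ⟶ ⟨p, hp⟩).op rfl))
      refine ⟨y, fun j => ?_, fun y' hy'' => hy' y' fun p hp b => ?_⟩
      · have := hy j.right.unop.obj j.right.unop.property j.hom.unop
        exact this
      · have := hy'' (obj k Z.unop hp b)
        exact this
    exact hpw.isRightKanExtension
/-! ### Auxiliary lemmas -/

namespace GrothCosk

open CategoryTheory.Functor CategoryTheory.Limits SimplicialObject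
open scoped Simplicial

variable {S}

theorem NerveChain.arrow_congr {n : SimplexCategory} {t t' : NerveChain S n} (e : t = t')
    (i j : Fin (n.len + 1)) (h : i ≤ j) :
    t.arrow i j h = eqToHom (by rw [e]) ≫ t'.arrow i j h ≫ eqToHom (by rw [e]) := by
  subst e; simp

section Construction

variable (X : Sᵒᵖ ⥤ SSet.{max u v}) (k : ℕ) (hk : 2 ≤ k) {n : SimplexCategory}
  (f : ∀ (p : SimplexCategory), p.len ≤ k → (p ⟶ n) → GrothSimplex S X p)

theorem hzero : (⦋0⦌ : SimplexCategory).len ≤ k := by rw [len_mk]; omega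

include hk in
theorem hone : (⦋1⦌ : SimplexCategory).len ≤ k := by rw [len_mk]; omega

include hk in
theorem htwo : (⦋2⦌ : SimplexCategory).len ≤ k := by rw [len_mk]; omega

/-- The vertices of the candidate chain. -/
def V (i : Fin (n.len + 1)) : S :=
  (f ⦋0⦌ (hzero k) (SimplexCategory.const ⦋0⦌ n i)).t.vertex 0

variable (hf : ∀ p hp q hq (g : q ⟶ p) (b : p ⟶ n),
  (grothS S X).map g.op (f p hp b) = f q hq (g ≫ b))

include hf in
theorem sv {p : SimplexCategory} (hp : p.len ≤ k) (a : p ⟶ n) (i : Fin (p.len + 1)) :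
    (f p hp a).t.vertex i = V X k f (a.toOrderHom i) := by
  have e := hf p hp ⦋0⦌ (hzero k) (SimplexCategory.const ⦋0⦌ p i) a
  have e2 : SimplexCategory.const ⦋0⦌ p i ≫ a
      = SimplexCategory.const ⦋0⦌ n (a.toOrderHom i) := by
    rw [SimplexCategory.const_comp]
  rw [e2] at e
  exact congrArg (fun σ : GrothSimplex S X ⦋0⦌ => σ.t.vertex 0) e

/-- The arrows of the candidate chain. -/
noncomputable def A (i j : Fin (n.len + 1)) (hij : i ≤ j) :
    V X k f i ⟶ V X k f j :=
  eqToHom (sv X k f hf (hone k hk) (mkOfLe i j hij) 0).symm ≫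
    (f ⦋1⦌ (hone k hk) (mkOfLe i j hij)).t.arrow 0 1 (by decide) ≫
    eqToHom (sv X k f hf (hone k hk) (mkOfLe i j hij) 1)

include hf in
theorem sa {p : SimplexCategory} (hp : p.len ≤ k) (a : p ⟶ n)
    (i j : Fin (p.len + 1)) (hij : i ≤ j) :
    (f p hp a).t.arrow i j hij =
      eqToHom (sv X k f hf hp a i) ≫
        A X k hk f hf (a.toOrderHom i) (a.toOrderHom j) (a.toOrderHom.monotone hij) ≫
        eqToHom (sv X k f hf hp a j).symm := by
  have e := hf p hp ⦋1⦌ (hone k hk) (mkOfLe i j hij) a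
  have e2 : mkOfLe i j hij ≫ a
      = mkOfLe (a.toOrderHom i) (a.toOrderHom j) (a.toOrderHom.monotone hij) :=
    SimplexCategory.Hom.ext_one_left _ _ rfl rfl
  rw [e2] at e
  have ec := congrArg GrothSimplex.t e
  have q0 : (f p hp a).t.vertex i
      = (f ⦋1⦌ (hone k hk)
          (mkOfLe (a.toOrderHom i) (a.toOrderHom j) (a.toOrderHom.monotone hij))).t.vertex 0 :=
    congrArg (fun t : NerveChain S ⦋1⦌ => t.vertex 0) ec
  have q1 : (f ⦋1⦌ (hone k hk)
        (mkOfLe (a.toOrderHom i) (a.toOrderHom j) (a.toOrderHom.monotone hij))).t.vertex 1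
      = (f p hp a).t.vertex j :=
    (congrArg (fun t : NerveChain S ⦋1⦌ => t.vertex 1) ec).symm
  calc (f p hp a).t.arrow i j hij
      = eqToHom q0 ≫
          (f ⦋1⦌ (hone k hk)
            (mkOfLe (a.toOrderHom i) (a.toOrderHom j) (a.toOrderHom.monotone hij))).t.arrow
            0 1 (by decide) ≫ eqToHom q1 :=
        NerveChain.arrow_congr ec 0 1 (by decide)
    _ = _ := by
        rw [A]
        simp only [Category.assoc, eqToHom_trans, eqToHom_trans_assoc]
        erw [eqToHom_trans_assoc, eqToHom_trans]

include hf in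
theorem Ar (i : Fin (n.len + 1)) (h : i ≤ i) : A X k hk f hf i i h = 𝟙 (V X k f i) := by
  have e2 : SimplexCategory.const ⦋1⦌ ⦋0⦌ 0 ≫ SimplexCategory.const ⦋0⦌ n i
      = mkOfLe i i h :=
    SimplexCategory.Hom.ext_one_left _ _ rfl rfl
  have e := hf ⦋0⦌ (hzero k) ⦋1⦌ (hone k hk) (SimplexCategory.const ⦋1⦌ ⦋0⦌ 0)
    (SimplexCategory.const ⦋0⦌ n i)
  rw [e2] at e
  have ec := congrArg GrothSimplex.t e.symm
  refine Eq.trans (b := eqToHom (sv X k f hf (hone k hk) (mkOfLe i i h) 0).symm ≫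
          (eqToHom (congrArg (fun t : NerveChain S ⦋1⦌ => t.vertex 0) ec) ≫
            (f ⦋0⦌ (hzero k) (SimplexCategory.const ⦋0⦌ n i)).t.arrow 0 0 le_rfl ≫
            eqToHom (congrArg (fun t : NerveChain S ⦋1⦌ => t.vertex 1) ec).symm) ≫
          eqToHom (sv X k f hf (hone k hk) (mkOfLe i i h) 1)) (by
        exact congrArg (fun w => _ ≫ w ≫ _) (NerveChain.arrow_congr ec 0 1 (by decide))) ?_
  rw [(f ⦋0⦌ (hzero k) (SimplexCategory.const ⦋0⦌ n i)).t.arrow_refl 0 le_rfl]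
  simp only [Category.id_comp, Category.comp_id, Category.assoc, eqToHom_trans,
    eqToHom_trans_assoc]
  try simp
  try rfl
  erw [Category.id_comp, eqToHom_trans, eqToHom_trans, eqToHom_refl]
  all_goals rfl

include hf in
theorem At (i j l : Fin (n.len + 1)) (hij : i ≤ j) (hjl : j ≤ l) (hil : i ≤ l) :
    A X k hk f hf i l hil = A X k hk f hf i j hij ≫ A X k hk f hf j l hjl := by
  have h02 := (f ⦋2⦌ (htwo k hk) (mkOfLeComp i j l hij hjl)).t.arrow_trans 0 1 2
    (by decide) (by decide) (by decide)
  rw [sa X k hk f hf (htwo k hk) (mkOfLeComp i j l hij hjl) 0 1 (by decide),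
    sa X k hk f hf (htwo k hk) (mkOfLeComp i j l hij hjl) 0 2 (by decide),
    sa X k hk f hf (htwo k hk) (mkOfLeComp i j l hij hjl) 1 2 (by decide)] at h02
  have h03 := congrArg
    (fun w => eqToHom (sv X k f hf (htwo k hk) (mkOfLeComp i j l hij hjl) 0).symm ≫ w ≫
      eqToHom (sv X k f hf (htwo k hk) (mkOfLeComp i j l hij hjl) 2)) h02
  simp only [Category.assoc, eqToHom_trans, eqToHom_refl, Category.id_comp,
    Category.comp_id, eqToHom_trans_assoc] at h03
  exact h03


/-! ### Transport helpers -/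

theorem Xcomp {a b c : S} (u : a ⟶ b) (v : b ⟶ c) {p : SimplexCategoryᵒᵖ}
    (z : (X.obj (op c)).obj p) :
    (X.map u.op).app p ((X.map v.op).app p z) = (X.map (u ≫ v).op).app p z := by
  rw [show (u ≫ v).op = v.op ≫ u.op from rfl, X.map_comp]; rfl

theorem xcast {q : SimplexCategory} {σ σ' : GrothSimplex S X q} (e : σ = σ')
    {m : SimplexCategory} (r : m ⟶ q) {s : S}
    (es : σ.t.vertex (r.toOrderHom 0) = s) (es' : σ'.t.vertex (r.toOrderHom 0) = s) :
    (X.map (eqToHom es.symm).op).app (op m) (σ.x m r)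
      = (X.map (eqToHom es'.symm).op).app (op m) (σ'.x m r) := by
  subst e; rfl

theorem xarg {q : SimplexCategory} (σ : GrothSimplex S X q) {m : SimplexCategory}
    {r r' : m ⟶ q} (err : r = r') {s : S}
    (es : σ.t.vertex (r.toOrderHom 0) = s) (es' : σ.t.vertex (r'.toOrderHom 0) = s) :
    (X.map (eqToHom es.symm).op).app (op m) (σ.x m r)
      = (X.map (eqToHom es'.symm).op).app (op m) (σ.x m r') := by
  subst err; rfl

theorem cast_heq {s s' : S} (e : s = s') {m : SimplexCategory}
    (z : (X.obj (op s)).obj (op m)) :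
    HEq ((X.map (eqToHom e.symm).op).app (op m) z) z := by
  subst e
  exact heq_of_eq
    (by rw [show (eqToHom (Eq.symm (rfl : s = s))).op = 𝟙 (op s) from rfl, X.map_id]; rfl)

theorem chain_ext {m : SimplexCategory} {t t' : NerveChain S m}
    (hv : ∀ i, t.vertex i = t'.vertex i)
    (ha : ∀ i j (h : i ≤ j),
      t.arrow i j h = eqToHom (hv i) ≫ t'.arrow i j h ≫ eqToHom (hv j).symm) :
    t = t' := by
  obtain ⟨v, ar, hr, htr⟩ := t
  obtain ⟨v', ar', hr', htr'⟩ := t'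
  dsimp at hv ha
  have hv' : v = v' := funext hv
  subst hv'
  have : ar = ar' := by
    funext i j hij
    have := ha i j hij
    simpa using this
  subst this
  rfl

/-! ### The x-part -/

/-- The canonical low-dimensional simplices of `X` extracted from the family. -/
def base {p : SimplexCategory} (hp : p.len ≤ k) (a : p ⟶ n) :
    (X.obj (op (V X k f (a.toOrderHom 0)))).obj (op p) :=
  (X.map (eqToHom (sv X k f hf hp a 0).symm).op).app (op p) ((f p hp a).x p (𝟙 p))

include hf in
theorem base_comp {p q : SimplexCategory} (hp : p.len ≤ k) (hq : q.len ≤ k)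
    (g : q ⟶ p) (a : p ⟶ n) :
    base X k f hf hq (g ≫ a) =
      (X.map (eqToHom (sv X k f hf hp a (g.toOrderHom 0)).symm).op).app (op q)
        ((f p hp a).x q g) := by
  exact (xcast X (hf p hp q hq g a).symm (𝟙 q) (sv X k f hf hq (g ≫ a) 0)
    (sv X k f hf hp a (g.toOrderHom 0))).trans
    (xarg X (f p hp a) (Category.id_comp g) (sv X k f hf hp a (g.toOrderHom 0))
      (sv X k f hf hp a (g.toOrderHom 0)))

include hk hf in
theorem basecompat {p q : SimplexCategory} (hp : p.len ≤ k) (hq : q.len ≤ k)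
    (g : q ⟶ p) (a : p ⟶ n) :
    (X.obj (op (V X k f (a.toOrderHom 0)))).map g.op (base X k f hf hp a) =
      (X.map (A X k hk f hf (a.toOrderHom 0) ((g ≫ a).toOrderHom 0)
        (a.toOrderHom.monotone (Fin.zero_le _))).op).app (op q)
        (base X k f hf hq (g ≫ a)) := by
  have comp := (f p hp a).compat p q g (𝟙 p) (Fin.zero_le _)
  have ex : (f p hp a).x q (g ≫ 𝟙 p) = (f p hp a).x q g :=
    eq_of_heq (congr_arg_heq ((f p hp a).x q) (Category.comp_id g))
  rw [ex] at comp
  have mor : eqToHom (sv X k f hf hp a 0).symm ≫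
        (f p hp a).t.arrow 0 (g.toOrderHom 0) (Fin.zero_le _) =
      A X k hk f hf (a.toOrderHom 0) ((g ≫ a).toOrderHom 0)
          (a.toOrderHom.monotone (Fin.zero_le _)) ≫
        eqToHom (sv X k f hf hp a (g.toOrderHom 0)).symm := by
    rw [sa X k hk f hf hp a 0 (g.toOrderHom 0) (Fin.zero_le _)]
    simp only [Category.assoc, eqToHom_trans, eqToHom_trans_assoc, eqToHom_refl,
      Category.id_comp]
    try rfl
  calc (X.obj (op (V X k f (a.toOrderHom 0)))).map g.op (base X k f hf hp a)
      = (X.map (eqToHom (sv X k f hf hp a 0).symm).op).app (op q)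
          ((X.obj (op ((f p hp a).t.vertex (SimplexCategory.Hom.toOrderHom (𝟙 p) 0)))).map g.op
            ((f p hp a).x p (𝟙 p))) :=
        (FunctorToTypes.naturality _ _ _).symm
    _ = (X.map (eqToHom (sv X k f hf hp a 0).symm).op).app (op q)
          ((X.map ((f p hp a).t.arrow 0 (g.toOrderHom 0) (Fin.zero_le _)).op).app (op q)
            ((f p hp a).x q g)) := by rw [comp]; try rfl
    _ = (X.map (eqToHom (sv X k f hf hp a 0).symm ≫
          (f p hp a).t.arrow 0 (g.toOrderHom 0) (Fin.zero_le _)).op).app (op q)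
          ((f p hp a).x q g) := Xcomp X _ _ _
    _ = (X.map (A X k hk f hf (a.toOrderHom 0) ((g ≫ a).toOrderHom 0)
            (a.toOrderHom.monotone (Fin.zero_le _)) ≫
          eqToHom (sv X k f hf hp a (g.toOrderHom 0)).symm).op).app (op q)
          ((f p hp a).x q g) := by rw [mor]
    _ = (X.map (A X k hk f hf (a.toOrderHom 0) ((g ≫ a).toOrderHom 0)
            (a.toOrderHom.monotone (Fin.zero_le _))).op).app (op q)
          ((X.map (eqToHom (sv X k f hf hp a (g.toOrderHom 0)).symm).op).app (op q)
            ((f p hp a).x q g)) := (Xcomp X _ _ _).symm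
    _ = _ := by rw [← base_comp X k f hf hp hq g a]

/-- The candidate compatible family of low-dimensional simplices of
`X (V (r 0))` associated to `r : m ⟶ n`. -/
noncomputable def xfam (m : SimplexCategory) (r : m ⟶ n) (p : SimplexCategory) (hp : p.len ≤ k)
    (b : p ⟶ m) : (X.obj (op (V X k f (r.toOrderHom 0)))).obj (op p) :=
  (X.map (A X k hk f hf (r.toOrderHom 0) ((b ≫ r).toOrderHom 0)
    (r.toOrderHom.monotone (Fin.zero_le _))).op).app (op p)
    (base X k f hf hp (b ≫ r))

include hk hf in
theorem xfamc (m : SimplexCategory) (r : m ⟶ n) {p q : SimplexCategory}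
    (hp : p.len ≤ k) (hq : q.len ≤ k) (g : q ⟶ p) (b : p ⟶ m) :
    (X.obj (op (V X k f (r.toOrderHom 0)))).map g.op (xfam X k hk f hf m r p hp b) =
      xfam X k hk f hf m r q hq (g ≫ b) := by
  have ebase : base X k f hf hq (g ≫ (b ≫ r)) = base X k f hf hq ((g ≫ b) ≫ r) :=
    eq_of_heq (congr_arg_heq (base X k f hf hq) (Category.assoc g b r).symm)
  calc (X.obj (op (V X k f (r.toOrderHom 0)))).map g.op (xfam X k hk f hf m r p hp b)
      = (X.map (A X k hk f hf (r.toOrderHom 0) ((b ≫ r).toOrderHom 0)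
            (r.toOrderHom.monotone (Fin.zero_le _))).op).app (op q)
          ((X.obj (op (V X k f ((b ≫ r).toOrderHom 0)))).map g.op
            (base X k f hf hp (b ≫ r))) :=
        (FunctorToTypes.naturality _ _ _).symm
    _ = (X.map (A X k hk f hf (r.toOrderHom 0) ((b ≫ r).toOrderHom 0)
            (r.toOrderHom.monotone (Fin.zero_le _))).op).app (op q)
          ((X.map (A X k hk f hf ((b ≫ r).toOrderHom 0) ((g ≫ (b ≫ r)).toOrderHom 0)
            ((b ≫ r).toOrderHom.monotone (Fin.zero_le _))).op).app (op q)
            (base X k f hf hq (g ≫ (b ≫ r)))) := by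
        rw [basecompat X k hk f hf hp hq g (b ≫ r)]
    _ = (X.map (A X k hk f hf (r.toOrderHom 0) ((b ≫ r).toOrderHom 0)
            (r.toOrderHom.monotone (Fin.zero_le _)) ≫
          A X k hk f hf ((b ≫ r).toOrderHom 0) ((g ≫ (b ≫ r)).toOrderHom 0)
            ((b ≫ r).toOrderHom.monotone (Fin.zero_le _))).op).app (op q)
          (base X k f hf hq (g ≫ (b ≫ r))) := Xcomp X _ _ _
    _ = (X.map (A X k hk f hf (r.toOrderHom 0) (((g ≫ b) ≫ r).toOrderHom 0)
            (r.toOrderHom.monotone (Fin.zero_le _))).op).app (op q)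
          (base X k f hf hq ((g ≫ b) ≫ r)) := by
        rw [← At X k hk f hf (r.toOrderHom 0) ((b ≫ r).toOrderHom 0)
          ((g ≫ (b ≫ r)).toOrderHom 0) (r.toOrderHom.monotone (Fin.zero_le _))
          ((b ≫ r).toOrderHom.monotone (Fin.zero_le _))
          (r.toOrderHom.monotone (Fin.zero_le _)), ebase]
        try rfl
    _ = _ := rfl

/-! ### Assembly of the filler -/

variable (hX : ∀ (s : S) (m : SimplexCategory)
    (g : ∀ (p : SimplexCategory), p.len ≤ k → (p ⟶ m) → (X.obj (op s)).obj (op p)),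
    (∀ p hp q hq (gg : q ⟶ p) (b : p ⟶ m),
      (X.obj (op s)).map gg.op (g p hp b) = g q hq (gg ≫ b)) →
    ∃! y : (X.obj (op s)).obj (op m),
      ∀ p (hp : p.len ≤ k) (b : p ⟶ m), (X.obj (op s)).map b.op y = g p hp b)

include hX in
theorem sep (s : S) (m : SimplexCategory) (y y' : (X.obj (op s)).obj (op m))
    (hyy : ∀ p (hp : p.len ≤ k) (b : p ⟶ m),
      (X.obj (op s)).map b.op y = (X.obj (op s)).map b.op y') : y = y' := by
  obtain ⟨z, _, hz2⟩ := hX s m (fun p _ b => (X.obj (op s)).map b.op y')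
    (fun p hp q hq g b => (FunctorToTypes.map_comp_apply _ _ _ _).symm)
  rw [hz2 y (fun p hp b => hyy p hp b), hz2 y' (fun p hp b => rfl)]

/-- The top-dimensional data of the filler. -/
noncomputable def xel (m : SimplexCategory) (r : m ⟶ n) :
    (X.obj (op (V X k f (r.toOrderHom 0)))).obj (op m) :=
  (hX (V X k f (r.toOrderHom 0)) m (xfam X k hk f hf m r)
    (fun p hp q hq g b => xfamc X k hk f hf m r hp hq g b)).choose

theorem xel_spec (m : SimplexCategory) (r : m ⟶ n) {p : SimplexCategory}
    (hp : p.len ≤ k) (b : p ⟶ m) :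
    (X.obj (op (V X k f (r.toOrderHom 0)))).map b.op (xel X k hk f hf hX m r) =
      xfam X k hk f hf m r p hp b :=
  (hX (V X k f (r.toOrderHom 0)) m (xfam X k hk f hf m r)
    (fun p hp q hq g b => xfamc X k hk f hf m r hp hq g b)).choose_spec.1 p hp b

/-- The filler simplex. -/
noncomputable def sigma : GrothSimplex S X n where
  t :=
    { vertex := V X k f
      arrow := A X k hk f hf
      arrow_refl := fun i h => Ar X k hk f hf i h
      arrow_trans := fun i j l hij hjl hil => At X k hk f hf i j l hij hjl hil }
  x := fun m r => xel X k hk f hf hX m r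
  compat := fun m m' α r hle => by
    refine sep X k hX (V X k f (r.toOrderHom 0)) m' _ _ (fun p hp b => ?_)
    have ebase : base X k f hf hp ((b ≫ α) ≫ r) = base X k f hf hp (b ≫ (α ≫ r)) :=
      eq_of_heq (congr_arg_heq (base X k f hf hp) (Category.assoc b α r))
    calc (X.obj (op (V X k f (r.toOrderHom 0)))).map b.op
          ((X.obj (op (V X k f (r.toOrderHom 0)))).map α.op (xel X k hk f hf hX m r))
        = (X.obj (op (V X k f (r.toOrderHom 0)))).map (b ≫ α).op
            (xel X k hk f hf hX m r) :=
          (FunctorToTypes.map_comp_apply _ _ _ _).symm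
      _ = (X.map (A X k hk f hf (r.toOrderHom 0) (((b ≫ α) ≫ r).toOrderHom 0)
              (r.toOrderHom.monotone (Fin.zero_le _))).op).app (op p)
            (base X k f hf hp ((b ≫ α) ≫ r)) :=
          xel_spec X k hk f hf hX m r hp (b ≫ α)
      _ = (X.map (A X k hk f hf (r.toOrderHom 0) ((α ≫ r).toOrderHom 0) hle ≫
            A X k hk f hf ((α ≫ r).toOrderHom 0) ((b ≫ (α ≫ r)).toOrderHom 0)
              ((α ≫ r).toOrderHom.monotone (Fin.zero_le _))).op).app (op p)
            (base X k f hf hp (b ≫ (α ≫ r))) := by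
          rw [← At X k hk f hf (r.toOrderHom 0) ((α ≫ r).toOrderHom 0)
            ((b ≫ (α ≫ r)).toOrderHom 0) hle
            ((α ≫ r).toOrderHom.monotone (Fin.zero_le _))
            (r.toOrderHom.monotone (Fin.zero_le _)), ebase]
          try rfl
      _ = (X.map (A X k hk f hf (r.toOrderHom 0) ((α ≫ r).toOrderHom 0) hle).op).app (op p)
            ((X.map (A X k hk f hf ((α ≫ r).toOrderHom 0) ((b ≫ (α ≫ r)).toOrderHom 0)
              ((α ≫ r).toOrderHom.monotone (Fin.zero_le _))).op).app (op p)
              (base X k f hf hp (b ≫ (α ≫ r)))) := (Xcomp X _ _ _).symm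
      _ = (X.map (A X k hk f hf (r.toOrderHom 0) ((α ≫ r).toOrderHom 0) hle).op).app (op p)
            ((X.obj (op (V X k f ((α ≫ r).toOrderHom 0)))).map b.op
              (xel X k hk f hf hX m' (α ≫ r))) := by
          rw [xel_spec X k hk f hf hX m' (α ≫ r) hp b]
          try rfl
      _ = (X.obj (op (V X k f (r.toOrderHom 0)))).map b.op
            ((X.map (A X k hk f hf (r.toOrderHom 0) ((α ≫ r).toOrderHom 0) hle).op).app
              (op m') (xel X k hk f hf hX m' (α ≫ r))) :=
          FunctorToTypes.naturality _ _ _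

include hk in
theorem fac (m : SimplexCategory) (hm : m.len ≤ k) (a : m ⟶ n) :
    (grothS S X).map a.op (sigma X k hk f hf hX) = f m hm a := by
  have ht : ((sigma X k hk f hf hX).t.pull a) = (f m hm a).t := by
    refine chain_ext (fun i => (sv X k f hf hm a i).symm) (fun i j h => ?_)
    rw [sa X k hk f hf hm a i j h]
    simp only [Category.assoc, eqToHom_trans, eqToHom_trans_assoc, eqToHom_refl,
      Category.comp_id, Category.id_comp]
    erw [eqToHom_trans_assoc, eqToHom_refl, eqToHom_refl, Category.id_comp, Category.comp_id]
    try rfl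
  refine GrothSimplex.ext_aux S ht (fun m' r => ?_)
  have hcl : (X.map (eqToHom (sv X k f hf hm a (r.toOrderHom 0)).symm).op).app (op m')
      ((f m hm a).x m' r) = xel X k hk f hf hX m' (r ≫ a) := by
    refine sep X k hX _ m' _ _ (fun p hp b => ?_)
    have ebase : base X k f hf hp ((b ≫ r) ≫ a) = base X k f hf hp (b ≫ (r ≫ a)) :=
      eq_of_heq (congr_arg_heq (base X k f hf hp) (Category.assoc b r a))
    have comp := (f m hm a).compat m' p b r (r.toOrderHom.monotone (Fin.zero_le _))
    have mor : eqToHom (sv X k f hf hm a (r.toOrderHom 0)).symm ≫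
          (f m hm a).t.arrow (r.toOrderHom 0) ((b ≫ r).toOrderHom 0)
            (r.toOrderHom.monotone (Fin.zero_le _)) =
        A X k hk f hf (a.toOrderHom (r.toOrderHom 0)) (a.toOrderHom ((b ≫ r).toOrderHom 0))
            (a.toOrderHom.monotone (r.toOrderHom.monotone (Fin.zero_le _))) ≫
          eqToHom (sv X k f hf hm a ((b ≫ r).toOrderHom 0)).symm := by
      rw [sa X k hk f hf hm a (r.toOrderHom 0) ((b ≫ r).toOrderHom 0)
        (r.toOrderHom.monotone (Fin.zero_le _))]
      simp only [Category.assoc, eqToHom_trans, eqToHom_trans_assoc, eqToHom_refl,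
        Category.id_comp]
      try rfl
    calc (X.obj (op (V X k f (a.toOrderHom (r.toOrderHom 0))))).map b.op
          ((X.map (eqToHom (sv X k f hf hm a (r.toOrderHom 0)).symm).op).app (op m')
            ((f m hm a).x m' r))
        = (X.map (eqToHom (sv X k f hf hm a (r.toOrderHom 0)).symm).op).app (op p)
            ((X.obj (op ((f m hm a).t.vertex (r.toOrderHom 0)))).map b.op
              ((f m hm a).x m' r)) := (FunctorToTypes.naturality _ _ _).symm
      _ = (X.map (eqToHom (sv X k f hf hm a (r.toOrderHom 0)).symm).op).app (op p)
            ((X.map ((f m hm a).t.arrow (r.toOrderHom 0) ((b ≫ r).toOrderHom 0)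
              (r.toOrderHom.monotone (Fin.zero_le _))).op).app (op p)
              ((f m hm a).x p (b ≫ r))) := by rw [comp]; try rfl
      _ = (X.map (eqToHom (sv X k f hf hm a (r.toOrderHom 0)).symm ≫
            (f m hm a).t.arrow (r.toOrderHom 0) ((b ≫ r).toOrderHom 0)
              (r.toOrderHom.monotone (Fin.zero_le _))).op).app (op p)
            ((f m hm a).x p (b ≫ r)) := Xcomp X _ _ _
      _ = (X.map (A X k hk f hf (a.toOrderHom (r.toOrderHom 0))
              (a.toOrderHom ((b ≫ r).toOrderHom 0))
              (a.toOrderHom.monotone (r.toOrderHom.monotone (Fin.zero_le _))) ≫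
            eqToHom (sv X k f hf hm a ((b ≫ r).toOrderHom 0)).symm).op).app (op p)
            ((f m hm a).x p (b ≫ r)) := by rw [mor]
      _ = (X.map (A X k hk f hf (a.toOrderHom (r.toOrderHom 0))
              (a.toOrderHom ((b ≫ r).toOrderHom 0))
              (a.toOrderHom.monotone (r.toOrderHom.monotone (Fin.zero_le _)))).op).app (op p)
            ((X.map (eqToHom (sv X k f hf hm a ((b ≫ r).toOrderHom 0)).symm).op).app (op p)
              ((f m hm a).x p (b ≫ r))) := (Xcomp X _ _ _).symm
      _ = (X.map (A X k hk f hf (a.toOrderHom (r.toOrderHom 0))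
              (a.toOrderHom ((b ≫ r).toOrderHom 0))
              (a.toOrderHom.monotone (r.toOrderHom.monotone (Fin.zero_le _)))).op).app (op p)
            (base X k f hf hp ((b ≫ r) ≫ a)) := by
          rw [base_comp X k f hf hm hp (b ≫ r) a]
      _ = (X.map (A X k hk f hf (a.toOrderHom (r.toOrderHom 0))
              (a.toOrderHom ((b ≫ r).toOrderHom 0))
              (a.toOrderHom.monotone (r.toOrderHom.monotone (Fin.zero_le _)))).op).app (op p)
            (base X k f hf hp (b ≫ (r ≫ a))) := by rw [ebase]
      _ = (X.obj (op (V X k f (a.toOrderHom (r.toOrderHom 0))))).map b.op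
            (xel X k hk f hf hX m' (r ≫ a)) :=
          (xel_spec X k hk f hf hX m' (r ≫ a) hp b).symm
  have Hq := cast_heq X (sv X k f hf hm a (r.toOrderHom 0)) ((f m hm a).x m' r)
  rw [hcl] at Hq
  exact Hq

include hk in
theorem uniq (σ' : GrothSimplex S X n)
    (hy : ∀ p (hp : p.len ≤ k) (a : p ⟶ n), (grothS S X).map a.op σ' = f p hp a) :
    σ' = sigma X k hk f hf hX := by
  have hv : ∀ i, σ'.t.vertex i = V X k f i := fun i =>
    congrArg (fun σ : GrothSimplex S X ⦋0⦌ => σ.t.vertex 0)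
      (hy ⦋0⦌ (hzero k) (SimplexCategory.const ⦋0⦌ n i))
  have ht : σ'.t = (sigma X k hk f hf hX).t := by
    refine chain_ext hv (fun i j h => ?_)
    have e := (hy ⦋1⦌ (hone k hk) (mkOfLe i j h)).symm
    have ec := congrArg GrothSimplex.t e
    have q0 : (f ⦋1⦌ (hone k hk) (mkOfLe i j h)).t.vertex 0 = σ'.t.vertex i :=
      congrArg (fun t : NerveChain S ⦋1⦌ => t.vertex 0) ec
    have q1 : σ'.t.vertex j = (f ⦋1⦌ (hone k hk) (mkOfLe i j h)).t.vertex 1 :=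
      (congrArg (fun t : NerveChain S ⦋1⦌ => t.vertex 1) ec).symm
    have step : A X k hk f hf i j h =
        eqToHom (hv i).symm ≫ σ'.t.arrow i j h ≫ eqToHom (hv j) := by
      refine Eq.trans (b := eqToHom (sv X k f hf (hone k hk) (mkOfLe i j h) 0).symm ≫
              (eqToHom q0 ≫ σ'.t.arrow i j h ≫ eqToHom q1) ≫
              eqToHom (sv X k f hf (hone k hk) (mkOfLe i j h) 1)) (by
            exact congrArg (fun w => _ ≫ w ≫ _) (NerveChain.arrow_congr ec 0 1 (by decide))) ?_
      simp only [Category.assoc, eqToHom_trans, eqToHom_trans_assoc]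
      try rfl
    show σ'.t.arrow i j h = eqToHom (hv i) ≫ A X k hk f hf i j h ≫ eqToHom (hv j).symm
    rw [step]
    simp only [Category.assoc, eqToHom_trans, eqToHom_trans_assoc, eqToHom_refl,
      Category.comp_id, Category.id_comp]
    try rfl
  refine GrothSimplex.ext_aux S ht (fun m r => ?_)
  have hcl : (X.map (eqToHom (hv (r.toOrderHom 0)).symm).op).app (op m) (σ'.x m r) =
      xel X k hk f hf hX m r := by
    refine sep X k hX _ m _ _ (fun p hp b => ?_)
    have comp := σ'.compat m p b r (r.toOrderHom.monotone (Fin.zero_le _))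
    have bσ : base X k f hf hp (b ≫ r) =
        (X.map (eqToHom (hv ((b ≫ r).toOrderHom 0)).symm).op).app (op p)
          (σ'.x p (b ≫ r)) := by
      calc base X k f hf hp (b ≫ r)
          = (X.map (eqToHom (sv X k f hf hp (b ≫ r) 0).symm).op).app (op p)
              ((f p hp (b ≫ r)).x p (𝟙 p)) := rfl
        _ = (X.map (eqToHom ((hv ((b ≫ r).toOrderHom 0)) :
                ((grothS S X).map (b ≫ r).op σ').t.vertex
                  (SimplexCategory.Hom.toOrderHom (𝟙 p) 0)
                  = V X k f ((b ≫ r).toOrderHom 0)).symm).op).app (op p)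
              (((grothS S X).map (b ≫ r).op σ').x p (𝟙 p)) :=
            xcast X (hy p hp (b ≫ r)).symm (𝟙 p) (sv X k f hf hp (b ≫ r) 0)
              (hv ((b ≫ r).toOrderHom 0))
        _ = (X.map (eqToHom (hv ((b ≫ r).toOrderHom 0)).symm).op).app (op p)
              (σ'.x p (b ≫ r)) :=
            xarg X σ' (Category.id_comp (b ≫ r)) (hv ((b ≫ r).toOrderHom 0))
              (hv ((b ≫ r).toOrderHom 0))
    have mor : eqToHom (hv (r.toOrderHom 0)).symm ≫
          σ'.t.arrow (r.toOrderHom 0) ((b ≫ r).toOrderHom 0)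
            (r.toOrderHom.monotone (Fin.zero_le _)) =
        A X k hk f hf (r.toOrderHom 0) ((b ≫ r).toOrderHom 0)
            (r.toOrderHom.monotone (Fin.zero_le _)) ≫
          eqToHom (hv ((b ≫ r).toOrderHom 0)).symm := by
      rw [NerveChain.arrow_congr ht (r.toOrderHom 0) ((b ≫ r).toOrderHom 0)
        (r.toOrderHom.monotone (Fin.zero_le _))]
      simp only [Category.assoc, eqToHom_trans, eqToHom_trans_assoc, eqToHom_refl,
        Category.id_comp]
      erw [eqToHom_refl, Category.id_comp]
      try rfl
    calc (X.obj (op (V X k f (r.toOrderHom 0)))).map b.op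
          ((X.map (eqToHom (hv (r.toOrderHom 0)).symm).op).app (op m) (σ'.x m r))
        = (X.map (eqToHom (hv (r.toOrderHom 0)).symm).op).app (op p)
            ((X.obj (op (σ'.t.vertex (r.toOrderHom 0)))).map b.op (σ'.x m r)) :=
          (FunctorToTypes.naturality _ _ _).symm
      _ = (X.map (eqToHom (hv (r.toOrderHom 0)).symm).op).app (op p)
            ((X.map (σ'.t.arrow (r.toOrderHom 0) ((b ≫ r).toOrderHom 0)
              (r.toOrderHom.monotone (Fin.zero_le _))).op).app (op p)
              (σ'.x p (b ≫ r))) := by rw [comp]; try rfl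
      _ = (X.map (eqToHom (hv (r.toOrderHom 0)).symm ≫
            σ'.t.arrow (r.toOrderHom 0) ((b ≫ r).toOrderHom 0)
              (r.toOrderHom.monotone (Fin.zero_le _))).op).app (op p)
            (σ'.x p (b ≫ r)) := Xcomp X _ _ _
      _ = (X.map (A X k hk f hf (r.toOrderHom 0) ((b ≫ r).toOrderHom 0)
              (r.toOrderHom.monotone (Fin.zero_le _)) ≫
            eqToHom (hv ((b ≫ r).toOrderHom 0)).symm).op).app (op p)
            (σ'.x p (b ≫ r)) := by rw [mor]
      _ = (X.map (A X k hk f hf (r.toOrderHom 0) ((b ≫ r).toOrderHom 0)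
              (r.toOrderHom.monotone (Fin.zero_le _))).op).app (op p)
            ((X.map (eqToHom (hv ((b ≫ r).toOrderHom 0)).symm).op).app (op p)
              (σ'.x p (b ≫ r))) := (Xcomp X _ _ _).symm
      _ = (X.map (A X k hk f hf (r.toOrderHom 0) ((b ≫ r).toOrderHom 0)
              (r.toOrderHom.monotone (Fin.zero_le _))).op).app (op p)
            (base X k f hf hp (b ≫ r)) := by rw [bσ]
      _ = (X.obj (op (V X k f (r.toOrderHom 0)))).map b.op
            (xel X k hk f hf hX m r) :=
          (xel_spec X k hk f hf hX m r hp b).symm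
  have Hq := cast_heq X (hv (r.toOrderHom 0)) (σ'.x m r)
  rw [hcl] at Hq
  exact Hq.symm

end Construction
end GrothCosk

open Limits in
/-- **Coskeletality of the simplicial Grothendieck construction.**
Let `S` be a cartesian category, `X : Sᵒᵖ ⥤ sSet` a diagram of simplicial
sets, and `k ≥ 2`. If `X(s)` is a `k`-coskeletal simplicial set for every
object `s` of `S`, then `∫_S X` is `k`-coskeletal. -/
theorem grothS_isCoskeletal (X : Sᵒᵖ ⥤ SSet.{max u v}) [HasFiniteProducts S]
    (k : ℕ) (hk : 2 ≤ k)
    (h : ∀ s : S, SimplicialObject.IsCoskeletal (X.obj (op s)) k) :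
    SimplicialObject.IsCoskeletal (grothS S X) k := by
  rw [bridge (grothS S X) k]
  intro n fam hfam
  have hX := fun s : S => (bridge (X.obj (op s)) k).mp (h s)
  exact ⟨GrothCosk.sigma X k hk fam hfam hX,
    fun p hp b => GrothCosk.fac X k hk fam hfam hX p hp b,
    fun σ' hσ' => GrothCosk.uniq X k hk fam hfam hX σ' hσ'⟩
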